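/- Let σ > 0 and, for each N ≥ 2, let X₁, …, X_N be independent random variables each distributed as the real Gaussian measure with mean 0 and variance σ². Then the probability that any coefficient exceeds the universal threshold λ_N = σ√(2 log N) tends to zero: P(max_{1 ≤ i ≤ N} |X_i| > σ√(2 log N)) → 0 as N → ∞. (The property justifying the universal threshold λ = σ√(2 log N): under Gaussian assumptions it suppresses all noise-only coefficients of a length-N sequence with probability tending to one.) -/

import Mathlib

open MeasureTheory ProbabilityTheory Filter Real Set
open scoped NNReal ENNReal

lemma integrableOn_aux {v : ℝ} (hv : 0 < v) {t : ℝ} (ht : 0 < t) :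
    IntegrableOn (fun x => x * Real.exp (-(x^2) / (2*v))) (Set.Ioi t) ∧
    ∫ x in Set.Ioi t, x * Real.exp (-(x^2) / (2*v)) = v * Real.exp (-(t^2) / (2*v)) := by
  have hderiv : ∀ x ∈ Set.Ici t,
      HasDerivAt (fun y => -v * Real.exp (-(y^2)/(2*v))) (x * Real.exp (-(x^2)/(2*v))) x := by
    intro x _
    have h1 : HasDerivAt (fun y : ℝ => -(y^2)/(2*v)) (-(2*x)/(2*v)) x := by
      have := (hasDerivAt_pow 2 x).neg
      simpa using this.div_const (2*v)
    have h2 := (h1.exp).const_mul (-v)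
    refine h2.congr_deriv ?_
    field_simp
  have hpos : ∀ x ∈ Set.Ioi t, 0 ≤ x * Real.exp (-(x^2)/(2*v)) := fun x hx => by
    have hx0 : 0 < x := ht.trans hx
    positivity
  have hlim : Tendsto (fun y => -v * Real.exp (-(y^2)/(2*v))) atTop (nhds 0) := by
    have h3 : Tendsto (fun y : ℝ => (y^2)/(2*v)) atTop atTop :=
      (tendsto_pow_atTop two_ne_zero).atTop_div_const (by positivity)
    have h4 : Tendsto (fun y : ℝ => Real.exp (-(y^2)/(2*v))) atTop (nhds 0) := by
      refine (Real.tendsto_exp_neg_atTop_nhds_zero.comp h3).congr fun y => ?_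
      simp [Function.comp, neg_div]
    simpa using h4.const_mul (-v)
  refine ⟨integrableOn_Ioi_deriv_of_nonneg' hderiv hpos hlim, ?_⟩
  rw [integral_Ioi_of_hasDerivAt_of_nonneg' hderiv hpos hlim]
  ring

lemma gauss_tail_Ioi (v : ℝ≥0) (hv : 0 < (v:ℝ)) {t : ℝ} (ht : 0 < t) :
    ∫ x in Set.Ioi t, gaussianPDFReal 0 v x ≤ (v / t) * gaussianPDFReal 0 v t := by
  obtain ⟨hint, hval⟩ := integrableOn_aux hv ht
  set c : ℝ := (Real.sqrt (2 * π * v))⁻¹ with hc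
  have hcpos : 0 < c := by
    have := Real.pi_pos
    positivity
  have hpdf : ∀ x : ℝ, gaussianPDFReal 0 v x = c * Real.exp (-(x^2) / (2*v)) := by
    intro x
    simp [gaussianPDFReal, hc]
  calc ∫ x in Set.Ioi t, gaussianPDFReal 0 v x
      ≤ ∫ x in Set.Ioi t, (c/t) * (x * Real.exp (-(x^2) / (2*v))) := by
        refine setIntegral_mono_on ((integrable_gaussianPDFReal 0 v).integrableOn)
          (hint.const_mul _) measurableSet_Ioi fun x hx => ?_
        rw [hpdf]
        have hx : t < x := hx
        have he : 0 < Real.exp (-(x^2) / (2*v)) := Real.exp_pos _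
        rw [div_mul_eq_mul_div, le_div_iff₀ ht]
        nlinarith [mul_pos hcpos he]
    _ = (c/t) * (v * Real.exp (-(t^2) / (2*v))) := by
        rw [MeasureTheory.integral_const_mul, hval]
    _ = (v / t) * gaussianPDFReal 0 v t := by
        rw [hpdf]; ring

lemma gauss_abs_tail (v : ℝ≥0) (hv : 0 < (v:ℝ)) {t : ℝ} (ht : 0 < t) :
    gaussianReal 0 v {x | t < |x|} ≤ ENNReal.ofReal (2 * ((v / t) * gaussianPDFReal 0 v t)) := by
  have hvne : v ≠ 0 := by
    intro h; rw [h] at hv; simp at hv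
  have hIoi : gaussianReal 0 v (Set.Ioi t) ≤ ENNReal.ofReal ((v / t) * gaussianPDFReal 0 v t) := by
    rw [gaussianReal_apply_eq_integral 0 hvne]
    exact ENNReal.ofReal_le_ofReal (gauss_tail_Ioi v hv ht)
  have hneg : (gaussianReal 0 v).map (fun x => (-1:ℝ) * x) = gaussianReal 0 v := by
    rw [gaussianReal_map_const_mul]
    congr 1
    · ring
    · apply NNReal.coe_injective
      push_cast
      ring
  have hIio : gaussianReal 0 v (Set.Iio (-t)) = gaussianReal 0 v (Set.Ioi t) := by
    conv_lhs => rw [← hneg]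
    rw [Measure.map_apply (by fun_prop) measurableSet_Iio]
    congr 1
    ext x
    simp only [Set.mem_preimage, Set.mem_Iio, Set.mem_Ioi]
    constructor <;> intro h <;> nlinarith
  have hsub : {x : ℝ | t < |x|} ⊆ Set.Iio (-t) ∪ Set.Ioi t := by
    intro x hx
    have hx' : t < |x| := hx
    rcases lt_abs.mp hx' with h | h
    · exact Or.inr (Set.mem_Ioi.mpr h)
    · exact Or.inl (Set.mem_Iio.mpr (by linarith))
  calc gaussianReal 0 v {x | t < |x|}
      ≤ gaussianReal 0 v (Set.Iio (-t)) + gaussianReal 0 v (Set.Ioi t) :=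
        le_trans (measure_mono hsub) (measure_union_le _ _)
    _ ≤ ENNReal.ofReal ((v / t) * gaussianPDFReal 0 v t)
        + ENNReal.ofReal ((v / t) * gaussianPDFReal 0 v t) := by
        rw [hIio]; exact add_le_add hIoi hIoi
    _ = ENNReal.ofReal (2 * ((v / t) * gaussianPDFReal 0 v t)) := by
        rw [← ENNReal.ofReal_add (mul_nonneg (by positivity) (gaussianPDFReal_nonneg _ _ _)) (mul_nonneg (by positivity) (gaussianPDFReal_nonneg _ _ _))]
        congr 1
        ring

/-- The universal threshold suppresses all noise-only coefficients with probability
tending to one: if for each `N` the variables `X N 0, …, X N (N-1)` are independent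
`N(0, σ²)` Gaussians, then
`P(max_i |X N i| > σ √(2 log N)) → 0` as `N → ∞`. -/
theorem universal_threshold_suppresses_noise
    (σ : ℝ) (hσ : 0 < σ)
    {Ωs : ℕ → Type*} [∀ N, MeasureSpace (Ωs N)]
    [∀ N, IsProbabilityMeasure (ℙ : Measure (Ωs N))]
    (X : (N : ℕ) → Fin N → Ωs N → ℝ)
    (hindep : ∀ N, 2 ≤ N → iIndepFun (X N) ℙ)
    (hdist : ∀ N, 2 ≤ N → ∀ i, Measure.map (X N i) ℙ = gaussianReal 0 ⟨σ ^ 2, sq_nonneg σ⟩) :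
    Tendsto
      (fun N : ℕ =>
        ℙ {ω : Ωs N | ∃ i : Fin N, σ * Real.sqrt (2 * Real.log N) < |X N i ω|})
      atTop (nhds 0) := by
  set v : ℝ≥0 := ⟨σ ^ 2, sq_nonneg σ⟩ with hvdef
  have hv : 0 < (v:ℝ) := pow_pos hσ 2
  set T : ℕ → ℝ := fun N => σ * Real.sqrt (2 * Real.log N) with hT
  set g : ℕ → ℝ≥0∞ := fun N =>
    ENNReal.ofReal (2 * ((v:ℝ) / T N) * (Real.sqrt (2 * π * v))⁻¹) with hg
  -- the bound
  have hbound : ∀ N : ℕ, 2 ≤ N →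
      ℙ {ω : Ωs N | ∃ i : Fin N, T N < |X N i ω|} ≤ g N := by
    intro N hN
    have hN1 : (1:ℝ) < N := by exact_mod_cast Nat.lt_of_lt_of_le one_lt_two hN
    have hlog : 0 < Real.log N := Real.log_pos hN1
    have ht : 0 < T N := by
      have : 0 < Real.sqrt (2 * Real.log N) := Real.sqrt_pos.mpr (by linarith)
      exact mul_pos hσ this
    -- measurable set of reals
    have hA : MeasurableSet {x : ℝ | T N < |x|} :=
      measurableSet_lt measurable_const continuous_abs.measurable
    -- each X N i is AEMeasurable
    have haem : ∀ i : Fin N, AEMeasurable (X N i) ℙ := by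
      intro i
      by_contra h
      have := Measure.map_of_not_aemeasurable h
      rw [hdist N hN i] at this
      have h1 : (gaussianReal 0 v) Set.univ = 1 := measure_univ
      rw [this] at h1
      simp at h1
    have hsetU : {ω : Ωs N | ∃ i : Fin N, T N < |X N i ω|}
        = ⋃ i : Fin N, X N i ⁻¹' {x : ℝ | T N < |x|} := by
      ext ω; simp [Set.mem_iUnion]
    have hterm : ∀ i : Fin N,
        ℙ (X N i ⁻¹' {x : ℝ | T N < |x|})
          ≤ ENNReal.ofReal (2 * (((v:ℝ) / T N) * gaussianPDFReal 0 v (T N))) := by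
      intro i
      rw [← Measure.map_apply_of_aemeasurable (haem i) hA, hdist N hN i]
      exact gauss_abs_tail v hv ht
    have hNpos : (0:ℝ) < N := by positivity
    have hpdfT : gaussianPDFReal 0 v (T N)
        = (Real.sqrt (2 * π * v))⁻¹ * ((N:ℝ))⁻¹ := by
      rw [gaussianPDFReal]
      congr 1
      have hsq : (T N)^2 = σ^2 * (2 * Real.log N) := by
        rw [hT]
        rw [mul_pow, Real.sq_sqrt (by linarith)]
      have hv2 : (v:ℝ) = σ^2 := rfl
      rw [sub_zero, hsq, hv2]
      have : -(σ ^ 2 * (2 * Real.log ↑N)) / (2 * σ ^ 2) = - Real.log N := by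
        field_simp
      rw [this, Real.exp_neg, Real.exp_log hNpos]
    calc ℙ {ω : Ωs N | ∃ i : Fin N, T N < |X N i ω|}
        ≤ ∑' i : Fin N, ℙ (X N i ⁻¹' {x : ℝ | T N < |x|}) := by
          rw [hsetU]; exact measure_iUnion_le _
      _ ≤ ∑' _i : Fin N, ENNReal.ofReal (2 * (((v:ℝ) / T N) * gaussianPDFReal 0 v (T N))) :=
          ENNReal.tsum_le_tsum hterm
      _ = (N : ℝ≥0∞) * ENNReal.ofReal (2 * (((v:ℝ) / T N) * gaussianPDFReal 0 v (T N))) := by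
          rw [tsum_fintype]
          simp [Finset.sum_const, Finset.card_univ, mul_comm]
      _ = g N := by
          rw [hpdfT, hg]
          rw [← ENNReal.ofReal_natCast N, ← ENNReal.ofReal_mul (by positivity)]
          congr 1
          field_simp
  -- the bound tends to zero
  have hTtop : Tendsto T atTop atTop := by
    have hsqrt : Tendsto Real.sqrt atTop atTop := by
      rw [tendsto_atTop_atTop]
      intro b
      exact ⟨b^2, fun a ha => le_trans (by rw [Real.sqrt_sq_eq_abs]; exact le_abs_self b)
        (Real.sqrt_le_sqrt ha)⟩
    have hlogtop : Tendsto (fun N : ℕ => 2 * Real.log N) atTop atTop := by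
      exact (Real.tendsto_log_atTop.comp tendsto_natCast_atTop_atTop).const_mul_atTop two_pos
    exact (hsqrt.comp hlogtop).const_mul_atTop hσ
  have hgzero : Tendsto g atTop (nhds 0) := by
    have hinner : Tendsto (fun N => 2 * ((v:ℝ) / T N) * (Real.sqrt (2 * π * v))⁻¹)
        atTop (nhds 0) := by
      have := (tendsto_const_nhds (x := (2 * (v:ℝ) * (Real.sqrt (2 * π * v))⁻¹))
        (f := atTop (α := ℕ))).div_atTop hTtop
      refine this.congr fun N => ?_
      ring
    have := (ENNReal.continuous_ofReal.tendsto 0).comp hinner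
    simpa [hg, Function.comp_def] using this
  refine tendsto_of_tendsto_of_tendsto_of_le_of_le' tendsto_const_nhds hgzero ?_ ?_
  · filter_upwards with N using zero_le
  · filter_upwards [eventually_ge_atTop 2] with N hN using hbound N hN
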